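/- Let f : α → α be a function and define the relation B ≤ C iff there exists n : ℕ with f^[n] B = C. Let L be a type and loctype : L → α a function, and for C : α define ⟦C⟧ := insert none {x : Option L | ∃ ℓ, x = some ℓ ∧ loctype ℓ ≤ C}. If B and C are incomparable, i.e. ¬(B ≤ C) and ¬(C ≤ B), then ⟦B⟧ ∩ ⟦C⟧ = {none}. -/
import Mathlib


/-- The subclass relation determined by the superclass function `f`:
`B ≤ C` iff some iterate of `f` maps `B` to `C`. -/
def subcl {α : Type*} (f : α → α) (B C : α) : Prop := ∃ n : ℕ, f^[n] B = C

/-- The meaning of a class type `C`: `nil` (modelled by `none`) together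
with all locations whose class is a subclass of `C`. -/
def classMeaning {α L : Type*} (f : α → α) (loctype : L → α) (C : α) :
    Set (Option L) :=
  insert none {x : Option L | ∃ ℓ : L, x = some ℓ ∧ subcl f (loctype ℓ) C}

/-- The paper's Lemma 4.2: incomparable class types share only the nil
value. -/
theorem meaning_inter_of_incomparable {α L : Type*} (f : α → α)
    (loctype : L → α) (B C : α)
    (h1 : ¬ subcl f B C) (h2 : ¬ subcl f C B) :
    classMeaning f loctype B ∩ classMeaning f loctype C = {none} := by
  ext x
  simp only [Set.mem_inter_iff, classMeaning, Set.mem_insert_iff, Set.mem_setOf_eq,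
    Set.mem_singleton_iff]
  constructor
  · rintro ⟨hB, hC⟩
    rcases hB with rfl | ⟨ℓ, rfl, m, hm⟩
    · rfl
    rcases hC with h | ⟨ℓ', hℓ', n, hn⟩
    · exact absurd h (by simp)
    obtain rfl : ℓ = ℓ' := by injection hℓ'
    exfalso
    rcases le_total m n with h | h
    · exact h1 ⟨n - m, by rw [← hm, ← Function.iterate_add_apply, Nat.sub_add_cancel h, hn]⟩
    · exact h2 ⟨m - n, by rw [← hn, ← Function.iterate_add_apply, Nat.sub_add_cancel h, hm]⟩
  · rintro rfl
    exact ⟨Or.inl rfl, Or.inl rfl⟩
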